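/- The polynomial φ(t) = t^22 − 993t^21 − 1152t^20 − 123t^19 + 924t^18 + 584t^17 − 500t^16 − 1022t^15 − 661t^14 + 105t^13 + 476t^12 + 878t^11 + 476t^10 + 105t^9 − 661t^8 − 1022t^7 − 500t^6 + 584t^5 + 924t^4 − 123t^3 − 1152t^2 − 993t + 1 has exactly one real root λ with λ > 1, and this root satisfies 994.158 < λ < 994.159. -/
import Mathlib


open Polynomial

/-- The Salem polynomial of degree 22 arising from the supersingular K3 surface in
characteristic 7 with Artin invariant 1. -/
noncomputable def φ : Polynomial ℤ :=
  X ^ 22 - 993 * X ^ 21 - 1152 * X ^ 20 - 123 * X ^ 19 + 924 * X ^ 18 + 584 * X ^ 17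
    - 500 * X ^ 16 - 1022 * X ^ 15 - 661 * X ^ 14 + 105 * X ^ 13 + 476 * X ^ 12
    + 878 * X ^ 11 + 476 * X ^ 10 + 105 * X ^ 9 - 661 * X ^ 8 - 1022 * X ^ 7
    - 500 * X ^ 6 + 584 * X ^ 5 + 924 * X ^ 4 - 123 * X ^ 3 - 1152 * X ^ 2
    - 993 * X + 1

lemma φ_eval (x : ℝ) : aeval x φ = x^22 - 993*x^21 - 1152*x^20 - 123*x^19 + 924*x^18 + 584*x^17
    - 500*x^16 - 1022*x^15 - 661*x^14 + 105*x^13 + 476*x^12 + 878*x^11 + 476*x^10 + 105*x^9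
    - 661*x^8 - 1022*x^7 - 500*x^6 + 584*x^5 + 924*x^4 - 123*x^3 - 1152*x^2 - 993*x + 1 := by
  simp [φ, map_ofNat]

lemma φ_deriv_eval (x : ℝ) : aeval x (derivative φ) = 22*x^21 - 20853*x^20 - 23040*x^19
    - 2337*x^18 + 16632*x^17 + 9928*x^16 - 8000*x^15 - 15330*x^14 - 9254*x^13 + 1365*x^12
    + 5712*x^11 + 9658*x^10 + 4760*x^9 + 945*x^8 - 5288*x^7 - 7154*x^6 - 3000*x^5 + 2920*x^4
    + 3696*x^3 - 369*x^2 - 2304*x - 993 := by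
  simp [φ, map_ofNat]
  ring

/-- `φ` is negative on `(1, 994.158]`. -/
lemma φ_neg {x : ℝ} (h1 : 1 < x) (h2 : x ≤ 994.158) : aeval x φ < 0 := by
  rw [φ_eval]
  have h0 : (0:ℝ) < x := by linarith
  have p : ∀ k l : ℕ, k ≤ l → x^k ≤ x^l := fun k l h => pow_le_pow_right₀ h1.le h
  have hM : (0:ℝ) ≤ (x - 1) * (994.158 - x) := by
    apply mul_nonneg <;> linarith
  have hq : (0:ℝ) < 1152 + 993*x - x^2 := by nlinarith [hM]
  have hm : (0:ℝ) ≤ (x^2 - 1) * (1152 + 993*x - x^2) := by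
    apply mul_nonneg
    · nlinarith
    · linarith
  have hr : x^4 - 993*x^3 - 1152*x^2 - 123*x + 1508 < 0 := by nlinarith [hm, hM]
  have A : x^18 * (x^4 - 993*x^3 - 1152*x^2 - 123*x + 1508) < 0 :=
    mul_neg_of_pos_of_neg (by positivity) hr
  have B : x^13 * (2040 - 2183*x) < 0 :=
    mul_neg_of_pos_of_neg (by positivity) (by linarith)
  have C : x^5 * (1508 - 2183*x) < 0 :=
    mul_neg_of_pos_of_neg (by positivity) (by linarith)
  have D : -123*x^3 - 1152*x^2 - 993*x + 1 < 0 := by nlinarith [pow_pos h0 3, pow_pos h0 2]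
  have e17 := p 17 18 (by norm_num)
  have e16 := p 14 16 (by norm_num)
  have e15 := p 14 15 (by norm_num)
  have e12 := p 12 13 (by norm_num)
  have e11 := p 11 13 (by norm_num)
  have e10 := p 10 13 (by norm_num)
  have e9 := p 9 13 (by norm_num)
  have e8 := p 6 8 (by norm_num)
  have e7 := p 6 7 (by norm_num)
  have e4 := p 4 5 (by norm_num)
  nlinarith [A, B, C, D, e17, e16, e15, e12, e11, e10, e9, e8, e7, e4]

/-- The derivative of `φ` is positive on `[994.158, ∞)`. -/
lemma φ_deriv_pos {x : ℝ} (hx : 994.158 ≤ x) : 0 < aeval x (derivative φ) := by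
  rw [φ_deriv_eval]
  have h1 : (1:ℝ) < x := by linarith
  have h0 : (0:ℝ) < x := by linarith
  have p : ∀ k l : ℕ, k ≤ l → x^k ≤ x^l := fun k l h => pow_le_pow_right₀ h1.le h
  have key : 0 < x^19 * (22*x^2 - 20853*x - 77069) := by
    have : (0:ℝ) < 22*x^2 - 20853*x - 77069 := by nlinarith
    positivity
  have hdrop : x^19 * (22*x^2 - 20853*x - 77069) ≤ 22*x^21 - 20853*x^20 - 23040*x^19 - 2337*x^18
    + 16632*x^17 + 9928*x^16 - 8000*x^15 - 15330*x^14 - 9254*x^13 + 1365*x^12 + 5712*x^11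
    + 9658*x^10 + 4760*x^9 + 945*x^8 - 5288*x^7 - 7154*x^6 - 3000*x^5 + 2920*x^4 + 3696*x^3
    - 369*x^2 - 2304*x - 993 := by
    have e18 := p 18 19 (by norm_num); have e15 := p 15 19 (by norm_num)
    have e14 := p 14 19 (by norm_num); have e13 := p 13 19 (by norm_num)
    have e7 := p 7 19 (by norm_num); have e6 := p 6 19 (by norm_num)
    have e5 := p 5 19 (by norm_num); have e2 := p 2 19 (by norm_num)
    have e1 := p 1 19 (by norm_num); have e0 := p 0 19 (by norm_num)
    have q17 : (0:ℝ) ≤ x^17 := by positivity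
    have q16 : (0:ℝ) ≤ x^16 := by positivity
    have q12 : (0:ℝ) ≤ x^12 := by positivity
    have q11 : (0:ℝ) ≤ x^11 := by positivity
    have q10 : (0:ℝ) ≤ x^10 := by positivity
    have q9 : (0:ℝ) ≤ x^9 := by positivity
    have q8 : (0:ℝ) ≤ x^8 := by positivity
    have q4 : (0:ℝ) ≤ x^4 := by positivity
    have q3 : (0:ℝ) ≤ x^3 := by positivity
    simp only [pow_one, pow_zero] at e1 e0
    nlinarith [e18, e15, e14, e13, e7, e6, e5, e2, e1, e0]
  linarith

/-- `φ` is strictly increasing on `[994.158, ∞)`. -/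
lemma φ_strictMono : StrictMonoOn (fun x : ℝ => aeval x φ) (Set.Ici (994.158 : ℝ)) := by
  apply strictMonoOn_of_deriv_pos (convex_Ici _)
  · exact (φ.continuous_aeval).continuousOn
  · intro x hx
    rw [interior_Ici] at hx
    rw [Polynomial.deriv_aeval]
    exact φ_deriv_pos (le_of_lt hx)

lemma φ_at_a : aeval (994.158 : ℝ) φ < 0 := by
  rw [φ_eval]; norm_num

lemma φ_at_b : 0 < aeval (994.159 : ℝ) φ := by
  rw [φ_eval]; norm_num

/-- `φ` has exactly one real root `λ > 1`, and it satisfies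
`994.158 < λ < 994.159`. -/
theorem φ_unique_root_gt_one :
    (∃! lam : ℝ, 1 < lam ∧ Polynomial.aeval lam φ = 0) ∧
    (∀ lam : ℝ, 1 < lam → Polynomial.aeval lam φ = 0 →
      (994.158 : ℝ) < lam ∧ lam < (994.159 : ℝ)) := by
  have hbounds : ∀ lam : ℝ, 1 < lam → Polynomial.aeval lam φ = 0 →
      (994.158 : ℝ) < lam ∧ lam < (994.159 : ℝ) := by
    intro lam h1 hroot
    have ha : (994.158 : ℝ) < lam := by
      by_contra h
      push_neg at h
      exact absurd hroot (ne_of_lt (φ_neg h1 h))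
    refine ⟨ha, ?_⟩
    by_contra h
    push_neg at h
    have := φ_strictMono.monotoneOn (Set.mem_Ici.2 (by norm_num)) (Set.mem_Ici.2 ha.le) h
    rw [hroot] at this
    exact absurd (lt_of_lt_of_le φ_at_b this) (lt_irrefl 0)
  constructor
  · -- existence via IVT on [994.158, 994.159]
    have hcont : ContinuousOn (fun x : ℝ => aeval x φ) (Set.Icc (994.158 : ℝ) 994.159) :=
      (φ.continuous_aeval).continuousOn
    have hsub := intermediate_value_Ioo (by norm_num : (994.158:ℝ) ≤ 994.159) hcont
    have hmem : (0:ℝ) ∈ Set.Ioo (aeval (994.158 : ℝ) φ) (aeval (994.159 : ℝ) φ) :=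
      ⟨φ_at_a, φ_at_b⟩
    obtain ⟨c, hc, hc0⟩ := hsub hmem
    refine ⟨c, ⟨by linarith [hc.1], hc0⟩, ?_⟩
    intro y ⟨hy1, hy0⟩
    obtain ⟨hya, hyb⟩ := hbounds y hy1 hy0
    have hc1 : (1:ℝ) < c := by linarith [hc.1]
    exact φ_strictMono.injOn (Set.mem_Ici.2 hya.le) (Set.mem_Ici.2 hc.1.le)
      (by simp only at hc0; rw [hy0, hc0])
  · exact hbounds
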